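/- For all real p > 0 and all natural numbers n ≥ 1, ∑_{k=0}^{n} C(2n, 2k) · (Γ(2k+p)/Γ(p)) · (Γ(2n-2k+p)/Γ(p)) = (1/2) · (Γ(2p+2n)/Γ(2p) + Γ(n+p)·(2n)!/(Γ(p)·Γ(n+1))). -/

import Mathlib

open Finset Real

namespace Stmt3Aux

open Polynomial

lemma coeff_sum_CX (c : ℕ → ℤ) (q k : ℕ) :
    (∑ i ∈ range (q+1), C (c i) * X ^ i).coeff k = if k ≤ q then c k else 0 := by
  rw [finset_sum_coeff]
  simp only [coeff_C_mul, coeff_X_pow, mul_ite, mul_one, mul_zero]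
  rw [Finset.sum_ite_eq (range (q+1)) k c]
  simp [Nat.lt_succ_iff]

lemma coeff_sum_CX2 (c : ℕ → ℤ) (q n : ℕ) :
    (∑ i ∈ range (q+1), C (c i) * X ^ (2*i)).coeff (2*n) = if n ≤ q then c n else 0 := by
  rw [finset_sum_coeff]
  simp only [coeff_C_mul, coeff_X_pow, mul_ite, mul_one, mul_zero]
  have h : ∀ i ∈ range (q+1), (if 2*n = 2*i then c i else 0) = if n = i then c i else 0 := by
    intro i _; exact if_congr (by omega) rfl rfl
  rw [Finset.sum_congr rfl h, Finset.sum_ite_eq (range (q+1)) n c]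
  simp [Nat.lt_succ_iff]

lemma one_sub_X_pow (q : ℕ) :
    (1 - X : Polynomial ℤ) ^ q = ∑ i ∈ range (q+1), C ((-1)^i * q.choose i : ℤ) * X ^ i := by
  have h : ((1 - X : Polynomial ℤ)) = (-X) + 1 := by ring
  rw [h, add_pow]
  refine Finset.sum_congr rfl fun i _ => ?_
  rw [neg_pow, one_pow, mul_one]
  simp only [C_mul, C_pow, C_neg, C_1, map_natCast]
  ring

lemma one_sub_X2_pow (q : ℕ) :
    (1 - X^2 : Polynomial ℤ) ^ q = ∑ i ∈ range (q+1), C ((-1)^i * q.choose i : ℤ) * X ^ (2*i) := by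
  have h : ((1 - X^2 : Polynomial ℤ)) = (-(X^2)) + 1 := by ring
  rw [h, add_pow]
  refine Finset.sum_congr rfl fun i _ => ?_
  rw [neg_pow, one_pow, mul_one, pow_mul]
  simp only [C_mul, C_pow, C_neg, C_1, map_natCast]
  ring

lemma alt_choose_sum (q n : ℕ) :
    ∑ j ∈ range (2*n+1), (-1:ℤ)^j * (q.choose j) * (q.choose (2*n - j))
      = (-1)^n * q.choose n := by
  have key : ((1 - X : Polynomial ℤ)^q * (1 + X)^q).coeff (2*n)
      = ((1 - X^2 : Polynomial ℤ)^q).coeff (2*n) := by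
    rw [← mul_pow]
    ring_nf
  rw [coeff_mul, Finset.Nat.sum_antidiagonal_eq_sum_range_succ_mk] at key
  simp only [one_sub_X_pow, coeff_sum_CX, coeff_one_add_X_pow, one_sub_X2_pow, coeff_sum_CX2] at key
  simp only [Nat.succ_eq_add_one] at key
  calc ∑ j ∈ range (2*n+1), (-1:ℤ)^j * (q.choose j) * (q.choose (2*n - j))
      = ∑ j ∈ range (2*n+1), (if j ≤ q then (-1:ℤ)^j * q.choose j else 0) * (q.choose (2*n-j)) := by
        refine Finset.sum_congr rfl fun j _ => ?_
        by_cases h : j ≤ q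
        · simp [h]
        · simp [h, Nat.choose_eq_zero_of_lt (show q < j by omega)]
    _ = (-1:ℤ)^n * q.choose n := by
        rw [key]
        by_cases h : n ≤ q
        · simp [h]
        · simp [h, Nat.choose_eq_zero_of_lt (show q < n by omega)]

lemma nat_vdm (q m : ℕ) :
    ∑ j ∈ range (m+1), m.choose j * (q.descFactorial j * q.descFactorial (m-j))
      = (2*q).descFactorial m := by
  have h := Nat.add_choose_eq q q m
  rw [Finset.Nat.sum_antidiagonal_eq_sum_range_succ_mk] at h
  calc ∑ j ∈ range (m+1), m.choose j * (q.descFactorial j * q.descFactorial (m-j))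
      = ∑ j ∈ range (m+1), m.factorial * (q.choose j * q.choose (m-j)) := by
        refine Finset.sum_congr rfl fun j hj => ?_
        rw [Nat.descFactorial_eq_factorial_mul_choose, Nat.descFactorial_eq_factorial_mul_choose]
        have hjm : j ≤ m := Nat.lt_succ_iff.mp (Finset.mem_range.mp hj)
        rw [← Nat.choose_mul_factorial_mul_factorial hjm]
        ring
    _ = m.factorial * (q+q).choose m := by rw [← Finset.mul_sum, h]
    _ = (2*q).descFactorial m := by
        rw [Nat.descFactorial_eq_factorial_mul_choose, two_mul]

lemma int_alt (q n : ℕ) :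
    ∑ j ∈ range (2*n+1), (-1:ℤ)^j * ((2*n).choose j) * ((q.descFactorial j) * (q.descFactorial (2*n-j)))
      = (-1)^n * ((2*n).descFactorial n) * q.descFactorial n := by
  have h := alt_choose_sum q n
  calc ∑ j ∈ range (2*n+1), (-1:ℤ)^j * ((2*n).choose j) * ((q.descFactorial j) * (q.descFactorial (2*n-j)))
      = ∑ j ∈ range (2*n+1), ((2*n).factorial : ℤ) * ((-1)^j * q.choose j * q.choose (2*n-j)) := by
        refine Finset.sum_congr rfl fun j hj => ?_
        have hjm : j ≤ 2*n := Nat.lt_succ_iff.mp (Finset.mem_range.mp hj)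
        rw [Nat.descFactorial_eq_factorial_mul_choose, Nat.descFactorial_eq_factorial_mul_choose]
        rw [← Nat.choose_mul_factorial_mul_factorial hjm]
        push_cast
        ring
    _ = ((2*n).factorial : ℤ) * ((-1)^n * q.choose n) := by rw [← Finset.mul_sum, h]
    _ = (-1)^n * ((2*n).descFactorial n) * q.descFactorial n := by
        rw [Nat.descFactorial_eq_factorial_mul_choose, Nat.descFactorial_eq_factorial_mul_choose,
          ← Nat.choose_mul_factorial_mul_factorial (show n ≤ 2*n by omega)]
        push_cast [show 2*n - n = n by omega]
        ring

lemma P1 (m : ℕ) :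
    ∑ j ∈ range (m+1), ((m.choose j : ℝ)) • (descPochhammer ℝ j * descPochhammer ℝ (m-j))
      = (descPochhammer ℝ m).comp (Polynomial.C 2 * Polynomial.X) := by
  apply eq_of_infinite_eval_eq
  apply Set.infinite_of_injective_forall_mem (f := fun q : ℕ => (q : ℝ)) Nat.cast_injective
  intro q
  simp only [Set.mem_setOf_eq, eval_finset_sum, eval_smul, eval_mul, smul_eq_mul, eval_comp,
    eval_C, eval_X, descPochhammer_eval_eq_descFactorial]
  have h2 : (2 : ℝ) * q = ((2*q : ℕ) : ℝ) := by push_cast; ring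
  rw [h2, descPochhammer_eval_eq_descFactorial]
  exact_mod_cast congrArg (Nat.cast : ℕ → ℝ) (nat_vdm q m)

lemma P2 (n : ℕ) :
    ∑ j ∈ range (2*n+1), ((-1:ℝ)^j * ((2*n).choose j)) • (descPochhammer ℝ j * descPochhammer ℝ (2*n-j))
      = ((-1:ℝ)^n * ((2*n).descFactorial n)) • descPochhammer ℝ n := by
  apply eq_of_infinite_eval_eq
  apply Set.infinite_of_injective_forall_mem (f := fun q : ℕ => (q : ℝ)) Nat.cast_injective
  intro q
  simp only [Set.mem_setOf_eq, eval_finset_sum, eval_smul, eval_mul, smul_eq_mul,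
    descPochhammer_eval_eq_descFactorial]
  exact_mod_cast congrArg (Int.cast : ℤ → ℝ) (int_alt q n)

lemma desc_eval_neg (k : ℕ) (x : ℝ) :
    (descPochhammer ℝ k).eval (-x) = (-1)^k * (ascPochhammer ℝ k).eval x := by
  induction k with
  | zero => simp
  | succ m ih =>
    rw [descPochhammer_succ_eval, ascPochhammer_succ_eval, ih]
    ring

lemma L1 (x : ℝ) (n : ℕ) :
    ∑ j ∈ range (2*n+1), (((2*n).choose j : ℝ)) * (ascPochhammer ℝ j).eval x
        * (ascPochhammer ℝ (2*n-j)).eval x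
      = (ascPochhammer ℝ (2*n)).eval (2*x) := by
  calc ∑ j ∈ range (2*n+1), (((2*n).choose j : ℝ)) * (ascPochhammer ℝ j).eval x
        * (ascPochhammer ℝ (2*n-j)).eval x
      = ∑ j ∈ range (2*n+1),
          eval (-x) ((((2*n).choose j : ℝ)) • (descPochhammer ℝ j * descPochhammer ℝ (2*n-j))) := by
        refine Finset.sum_congr rfl fun j hj => ?_
        have hjm : j ≤ 2*n := Nat.lt_succ_iff.mp (Finset.mem_range.mp hj)
        rw [eval_smul, eval_mul, desc_eval_neg, desc_eval_neg, smul_eq_mul]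
        have hs : (-1:ℝ)^j * (-1:ℝ)^(2*n-j) = 1 := by
          rw [← pow_add, show j + (2*n - j) = 2*n by omega]
          exact Even.neg_one_pow ⟨n, by ring⟩
        linear_combination (((2*n).choose j : ℝ) * (ascPochhammer ℝ j).eval x
          * (ascPochhammer ℝ (2*n-j)).eval x) * hs.symm
    _ = eval (-x) ((descPochhammer ℝ (2*n)).comp (Polynomial.C 2 * Polynomial.X)) := by
        rw [← eval_finset_sum, P1 (2*n)]
    _ = (ascPochhammer ℝ (2*n)).eval (2*x) := by
        rw [eval_comp, eval_mul, eval_C, eval_X, show (2:ℝ)*(-x) = -(2*x) by ring,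
          desc_eval_neg, Even.neg_one_pow ⟨n, by ring⟩, one_mul]

lemma L2 (x : ℝ) (n : ℕ) :
    ∑ j ∈ range (2*n+1), (-1:ℝ)^j * ((((2*n).choose j : ℝ)) * (ascPochhammer ℝ j).eval x
        * (ascPochhammer ℝ (2*n-j)).eval x)
      = ((2*n).descFactorial n : ℝ) * (ascPochhammer ℝ n).eval x := by
  calc ∑ j ∈ range (2*n+1), (-1:ℝ)^j * ((((2*n).choose j : ℝ)) * (ascPochhammer ℝ j).eval x
        * (ascPochhammer ℝ (2*n-j)).eval x)
      = ∑ j ∈ range (2*n+1),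
          eval (-x) (((-1:ℝ)^j * ((2*n).choose j)) • (descPochhammer ℝ j * descPochhammer ℝ (2*n-j))) := by
        refine Finset.sum_congr rfl fun j hj => ?_
        have hjm : j ≤ 2*n := Nat.lt_succ_iff.mp (Finset.mem_range.mp hj)
        rw [eval_smul, eval_mul, desc_eval_neg, desc_eval_neg, smul_eq_mul]
        have hs : (-1:ℝ)^j * (-1:ℝ)^(2*n-j) = 1 := by
          rw [← pow_add, show j + (2*n - j) = 2*n by omega]
          exact Even.neg_one_pow ⟨n, by ring⟩
        linear_combination ((-1:ℝ)^j * ((2*n).choose j : ℝ) * (ascPochhammer ℝ j).eval x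
          * (ascPochhammer ℝ (2*n-j)).eval x) * hs.symm
    _ = eval (-x) (((-1:ℝ)^n * ((2*n).descFactorial n)) • descPochhammer ℝ n) := by
        rw [← eval_finset_sum, P2 n]
    _ = ((2*n).descFactorial n : ℝ) * (ascPochhammer ℝ n).eval x := by
        rw [eval_smul, smul_eq_mul, desc_eval_neg]
        have hs : (-1:ℝ)^n * (-1:ℝ)^n = 1 := by
          rw [← pow_add]; exact Even.neg_one_pow ⟨n, by ring⟩
        linear_combination (((2*n).descFactorial n : ℝ) * (ascPochhammer ℝ n).eval x) * hs

lemma gamma_ratio (x : ℝ) (hx : 0 < x) (k : ℕ) :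
    Real.Gamma (x + k) = (ascPochhammer ℝ k).eval x * Real.Gamma x := by
  induction k with
  | zero => simp
  | succ m ih =>
    have hxm : x + m ≠ 0 := by positivity
    have h : x + ((m : ℝ) + 1) = (x + m) + 1 := by ring
    rw [Nat.cast_succ, h, Real.Gamma_add_one hxm, ih, ascPochhammer_succ_eval]
    ring

lemma even_sum (f : ℕ → ℝ) (n : ℕ) :
    2 * ∑ k ∈ range (n+1), f (2*k)
      = ∑ j ∈ range (2*n+1), f j + ∑ j ∈ range (2*n+1), (-1:ℝ)^j * f j := by
  induction n with
  | zero => simp; ring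
  | succ m ih =>
    have e1 : (-1:ℝ)^(2*m+1) = -1 := Odd.neg_one_pow ⟨m, by ring⟩
    have e2 : (-1:ℝ)^(2*m+2) = 1 := Even.neg_one_pow ⟨m+1, by ring⟩
    have hL : ∑ k ∈ range (m+1+1), f (2*k) = (∑ k ∈ range (m+1), f (2*k)) + f (2*m+2) := by
      rw [Finset.sum_range_succ, show 2*(m+1) = 2*m+2 by ring]
    have hR1 : ∑ j ∈ range (2*(m+1)+1), f j
        = (∑ j ∈ range (2*m+1), f j) + f (2*m+1) + f (2*m+2) := by
      rw [show 2*(m+1)+1 = (2*m+1)+1+1 by ring, Finset.sum_range_succ, Finset.sum_range_succ]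
    have hR2 : ∑ j ∈ range (2*(m+1)+1), (-1:ℝ)^j * f j
        = (∑ j ∈ range (2*m+1), (-1:ℝ)^j * f j) - f (2*m+1) + f (2*m+2) := by
      rw [show 2*(m+1)+1 = (2*m+1)+1+1 by ring, Finset.sum_range_succ, Finset.sum_range_succ,
        show (2*m+1)+1 = 2*m+2 by ring, e1, e2]
      ring
    rw [hL, hR1, hR2, mul_add, ih]
    ring

end Stmt3Aux

open Stmt3Aux Polynomial in
theorem stmt3 (p : ℝ) (hp : 0 < p) (n : ℕ) (hn : 1 ≤ n) :
    ∑ k ∈ Finset.range (n + 1),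
        (Nat.choose (2 * n) (2 * k) : ℝ) * (Real.Gamma (2 * k + p) / Real.Gamma p)
          * (Real.Gamma (2 * (n : ℝ) - 2 * k + p) / Real.Gamma p)
      = (1 / 2) * (Real.Gamma (2 * p + 2 * n) / Real.Gamma (2 * p)
          + Real.Gamma (n + p) * (Nat.factorial (2 * n)) / (Real.Gamma p * Real.Gamma (n + 1))) := by
  have hΓp : (0:ℝ) < Real.Gamma p := Real.Gamma_pos_of_pos hp
  have h2p : (0:ℝ) < 2*p := by linarith
  have hΓ2p : (0:ℝ) < Real.Gamma (2*p) := Real.Gamma_pos_of_pos h2p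
  set A : ℕ → ℝ := fun j => (ascPochhammer ℝ j).eval p with hA
  have hLHS : ∀ k ∈ range (n+1),
      ((2*n).choose (2*k) : ℝ) * (Real.Gamma (2*(k:ℝ)+p)/Real.Gamma p)
        * (Real.Gamma (2*(n:ℝ)-2*(k:ℝ)+p)/Real.Gamma p)
      = ((2*n).choose (2*k) : ℝ) * A (2*k) * A (2*n - 2*k) := by
    intro k hk
    have hkn : k ≤ n := Nat.lt_succ_iff.mp (Finset.mem_range.mp hk)
    have e1 : (2:ℝ)*k + p = p + ((2*k : ℕ):ℝ) := by push_cast; ring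
    have e2 : 2*(n:ℝ) - 2*(k:ℝ) + p = p + ((2*n - 2*k : ℕ):ℝ) := by
      have h' : ((2*n - 2*k : ℕ):ℝ) = 2*(n:ℝ) - 2*(k:ℝ) := by
        rw [Nat.cast_sub (by omega : 2*k ≤ 2*n)]
        push_cast; ring
      rw [h']; ring
    rw [e1, e2, gamma_ratio p hp, gamma_ratio p hp,
      mul_div_cancel_right₀ _ hΓp.ne', mul_div_cancel_right₀ _ hΓp.ne']
  rw [Finset.sum_congr rfl hLHS]
  have key := even_sum (fun j => ((2*n).choose j : ℝ) * A j * A (2*n - j)) n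
  rw [L1 p n, L2 p n] at key
  have r1 : Real.Gamma (2*p + 2*(n:ℝ))/Real.Gamma (2*p) = (ascPochhammer ℝ (2*n)).eval (2*p) := by
    rw [show 2*p + 2*(n:ℝ) = 2*p + ((2*n:ℕ):ℝ) by norm_num, gamma_ratio _ h2p,
      mul_div_cancel_right₀ _ hΓ2p.ne']
  have r2 : Real.Gamma ((n:ℝ) + p) = A n * Real.Gamma p := by
    rw [show (n:ℝ)+p = p + (n:ℕ) by push_cast; ring, gamma_ratio p hp]
  have r3 : Real.Gamma ((n:ℝ)+1) = n.factorial := Real.Gamma_nat_eq_factorial n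
  have hdnat : (2*n).descFactorial n * n.factorial = (2*n).factorial := by
    rw [Nat.descFactorial_eq_factorial_mul_choose,
      ← Nat.choose_mul_factorial_mul_factorial (show n ≤ 2*n by omega),
      show 2*n-n = n by omega]
    ring
  have hd : ((2*n).descFactorial n : ℝ) * n.factorial = (2*n).factorial := by
    exact_mod_cast congrArg (Nat.cast : ℕ → ℝ) hdnat
  rw [r1, r2, r3]
  have hr4 : A n * Real.Gamma p * ((2*n).factorial : ℝ) / (Real.Gamma p * n.factorial)
      = ((2*n).descFactorial n : ℝ) * A n := by
    have hnf : (n.factorial : ℝ) ≠ 0 := by exact_mod_cast n.factorial_ne_zero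
    field_simp
    linear_combination (-1) * A n * hd
  rw [hr4]
  linarith [key]
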